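/- Suppose σ̃_A < σ̃_B, μ_A ≥ 0 and μ_B ≥ 0. For α ∈ (0,1) let t_α := Φ⁻¹(1−α) and define B(α) := 1 − p_A·(Δμ + t_α·Δσ̃)/(p_A·μ_A + p_B·μ_B + (φ(t_α)/α)·(p_A·σ̃_A + p_B·σ̃_B)). Then B(α) converges, as α → 0⁺, to 1 − p_A·Δσ̃/(p_A·σ̃_A + p_B·σ̃_B); that is, in the limit of a vanishing selection budget the upper bound of the fairness-cost theorem (for γ = 1) depends only on the variances σ̃_A, σ̃_B and not on the difference of means Δμ. -/

import Mathlib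

noncomputable def gpdf (t : ℝ) : ℝ := Real.exp (-t ^ 2 / 2) / Real.sqrt (2 * Real.pi)

noncomputable def gcdf (x : ℝ) : ℝ := ∫ t in Set.Iic x, gpdf t

noncomputable def gquant : ℝ → ℝ := Function.invFun gcdf

noncomputable def sHat (η σ : ℝ) : ℝ := Real.sqrt (η ^ 2 + σ ^ 2)

noncomputable def sTil (η σ : ℝ) : ℝ := η ^ 2 / sHat η σ

def Dset (pA α : ℝ) : Set ℝ :=
  {x | x ∈ Set.Ioo (0:ℝ) 1 ∧ (α - pA * x) / (1 - pA) ∈ Set.Ioo (0:ℝ) 1}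

noncomputable def Qfun (pA α μA μB sA sB x : ℝ) : ℝ :=
  (1 / α) * (pA * (μA * x + sA * gpdf (gquant (1 - x)))
    + (1 - pA) * (μB * ((α - pA * x) / (1 - pA))
      + sB * gpdf (gquant (1 - (α - pA * x) / (1 - pA)))))

noncomputable def clampTo (lo hi x : ℝ) : ℝ := min hi (max lo x)

open Real MeasureTheory Filter Set Topology

lemma gpdf_pos (t : ℝ) : 0 < gpdf t :=
  div_pos (exp_pos _) (sqrt_pos.2 (by positivity))

lemma gpdf_cont : Continuous gpdf := by
  unfold gpdf
  fun_prop

lemma gpdf_integrable : Integrable gpdf := by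
  have h : Integrable (fun t : ℝ => Real.exp (-(1/2 : ℝ) * t ^ 2)) :=
    integrable_exp_neg_mul_sq (by norm_num)
  have := h.div_const (Real.sqrt (2 * Real.pi))
  refine this.congr ?_
  filter_upwards with t
  simp only [gpdf]
  ring_nf

lemma integral_gpdf : ∫ t, gpdf t = 1 := by
  have h := integral_gaussian (1/2 : ℝ)
  unfold gpdf
  rw [integral_div]
  have : ∫ t : ℝ, Real.exp (-t ^ 2 / 2) = ∫ t : ℝ, Real.exp (-(1/2 : ℝ) * t ^ 2) := by
    congr 1; ext t; ring_nf
  rw [this, h]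
  rw [show Real.pi / (1/2 : ℝ) = 2 * Real.pi by ring]
  rw [div_self (by positivity)]

lemma gcdf_tendsto_atTop : Tendsto gcdf atTop (𝓝 1) := by
  have hcov : AECover (volume : Measure ℝ) atTop (fun x : ℝ => Iic x) :=
    aecover_Iic tendsto_id
  have := hcov.integral_tendsto_of_countably_generated gpdf_integrable
  rwa [integral_gpdf] at this

lemma one_sub_gcdf (x : ℝ) : 1 - gcdf x = ∫ t in Ioi x, gpdf t := by
  have h := intervalIntegral.integral_Iic_add_Ioi (b := x) (gpdf_integrable.integrableOn)
    (gpdf_integrable.integrableOn)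
  rw [integral_gpdf] at h
  unfold gcdf
  linarith

lemma setIntegral_gpdf_pos {s : Set ℝ} (hs : MeasurableSet s) (h0 : 0 < volume s) :
    0 < ∫ t in s, gpdf t := by
  rw [setIntegral_pos_iff_support_of_nonneg_ae
    (ae_of_all _ fun t => (gpdf_pos t).le) (gpdf_integrable.integrableOn)]
  have : (Function.support gpdf) = univ := by
    ext t; simp [Function.support, (gpdf_pos t).ne']
  rw [this, univ_inter]
  exact h0

lemma one_sub_gcdf_pos (x : ℝ) : 0 < 1 - gcdf x := by
  rw [one_sub_gcdf]
  exact setIntegral_gpdf_pos measurableSet_Ioi (by simp)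

lemma gcdf_lt_one (x : ℝ) : gcdf x < 1 := by linarith [one_sub_gcdf_pos x]

lemma gcdf_pos (x : ℝ) : 0 < gcdf x :=
  setIntegral_gpdf_pos measurableSet_Iic (by simp)

lemma gcdf_strictMono : StrictMono gcdf := by
  intro x y hxy
  have h := intervalIntegral.integral_Iic_sub_Iic (f := gpdf) (μ := volume) (a := x) (b := y)
    (gpdf_integrable.integrableOn) (gpdf_integrable.integrableOn)
  have hpos : 0 < ∫ t in x..y, gpdf t :=
    intervalIntegral.intervalIntegral_pos_of_pos gpdf_integrable.intervalIntegrable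
      gpdf_pos hxy
  unfold gcdf
  linarith [h]

lemma gcdf_tendsto_atBot : Tendsto gcdf atBot (𝓝 0) := by
  have hcov : AECover (volume : Measure ℝ) atBot (fun x : ℝ => Ioi x) :=
    aecover_Ioi tendsto_id
  have h := hcov.integral_tendsto_of_countably_generated gpdf_integrable
  rw [integral_gpdf] at h
  have : gcdf = fun x => 1 - ∫ t in Ioi x, gpdf t := by
    ext x; linarith [one_sub_gcdf x]
  rw [this]
  have := (tendsto_const_nhds (x := (1:ℝ)) (f := atBot)).sub h
  simpa using this

lemma gcdf_hasDerivAt (x : ℝ) : HasDerivAt gcdf (gpdf x) x := by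
  have hF : HasDerivAt (fun u => ∫ t in (0:ℝ)..u, gpdf t) (gpdf x) x :=
    intervalIntegral.integral_hasDerivAt_right
      gpdf_integrable.intervalIntegrable
      gpdf_cont.stronglyMeasurable.stronglyMeasurableAtFilter
      gpdf_cont.continuousAt
  have : gcdf = fun u => gcdf 0 + ∫ t in (0:ℝ)..u, gpdf t := by
    ext u
    have h := intervalIntegral.integral_Iic_sub_Iic (f := gpdf) (μ := volume) (a := (0:ℝ)) (b := u)
      (gpdf_integrable.integrableOn) (gpdf_integrable.integrableOn)
    unfold gcdf
    linarith [h]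
  rw [this]
  simpa [Pi.add_def] using (hasDerivAt_const x (gcdf 0)).add hF

lemma gcdf_continuous : Continuous gcdf :=
  continuous_iff_continuousAt.2 fun x => (gcdf_hasDerivAt x).continuousAt

lemma gcdf_surj {y : ℝ} (hy : y ∈ Ioo (0:ℝ) 1) : ∃ x, gcdf x = y := by
  obtain ⟨a, ha⟩ := (gcdf_tendsto_atBot.eventually_lt_const hy.1).exists
  obtain ⟨b, hb⟩ := (gcdf_tendsto_atTop.eventually_const_lt hy.2).exists
  have hab : a ≤ b := (gcdf_strictMono.lt_iff_lt.mp (ha.trans hb)).le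
  have := intermediate_value_Icc hab gcdf_continuous.continuousOn
  obtain ⟨x, _, hx⟩ := this ⟨ha.le, hb.le⟩
  exact ⟨x, hx⟩

lemma gcdf_gquant {y : ℝ} (hy : y ∈ Ioo (0:ℝ) 1) : gcdf (gquant y) = y :=
  Function.invFun_eq (gcdf_surj hy)

lemma gquant_tendsto : Tendsto (fun α : ℝ => gquant (1 - α)) (𝓝[>] (0:ℝ)) atTop := by
  rw [tendsto_atTop]
  intro C
  have h1 : (0:ℝ) < 1 - gcdf C := one_sub_gcdf_pos C
  have h2 : (0:ℝ) < min 1 (1 - gcdf C) := lt_min one_pos h1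
  filter_upwards [Ioo_mem_nhdsGT_of_mem (show (0:ℝ) ∈ Ico 0 (min 1 (1 - gcdf C)) from
    ⟨le_refl _, h2⟩)] with α hα
  have hα1 : α < 1 := lt_of_lt_of_le hα.2 (min_le_left _ _)
  have hα2 : α < 1 - gcdf C := lt_of_lt_of_le hα.2 (min_le_right _ _)
  have hy : (1 - α) ∈ Ioo (0:ℝ) 1 := ⟨by linarith, by linarith [hα.1]⟩
  have heq := gcdf_gquant hy
  have hlt : gcdf C < gcdf (gquant (1 - α)) := by rw [heq]; linarith
  exact (gcdf_strictMono.lt_iff_lt.mp hlt).le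

lemma gpdf_hasDerivAt (x : ℝ) : HasDerivAt gpdf (-x * gpdf x) x := by
  have h1 : HasDerivAt (fun t : ℝ => -t ^ 2 / 2) (-x) x := by
    have := ((hasDerivAt_pow 2 x).neg).div_const 2
    refine this.congr_deriv ?_
    simp
    ring
  have h : HasDerivAt (fun t : ℝ => Real.exp (-t ^ 2 / 2))
      (Real.exp (-x ^ 2 / 2) * (-x)) x := h1.exp
  have := h.div_const (Real.sqrt (2 * Real.pi))
  unfold gpdf
  refine this.congr_deriv ?_
  ring

lemma gpdf_tendsto : Tendsto gpdf atTop (𝓝 0) := by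
  have h1 : Tendsto (fun t : ℝ => -t ^ 2 / 2) atTop atBot := by
    have h0 : Tendsto (fun t : ℝ => -(t ^ 2 / 2)) atTop atBot :=
      tendsto_neg_atTop_atBot.comp
        ((tendsto_pow_atTop (by norm_num : 2 ≠ 0)).atTop_div_const (by norm_num))
    refine h0.congr (fun t => by ring)
  have h2 : Tendsto (fun t : ℝ => Real.exp (-t ^ 2 / 2)) atTop (𝓝 0) :=
    Real.tendsto_exp_atBot.comp h1
  have h3 := h2.div_const (Real.sqrt (2 * Real.pi))
  rw [zero_div] at h3
  unfold gpdf
  exact h3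

lemma gpdf_div_tendsto : Tendsto (fun t : ℝ => gpdf t / t) atTop (𝓝 0) := by
  apply tendsto_of_tendsto_of_tendsto_of_le_of_le' tendsto_const_nhds gpdf_tendsto
  · filter_upwards [eventually_ge_atTop (1:ℝ)] with t ht
    exact div_nonneg (gpdf_pos t).le (by linarith)
  · filter_upwards [eventually_ge_atTop (1:ℝ)] with t ht
    calc gpdf t / t ≤ gpdf t / 1 := by
          apply div_le_div_of_nonneg_left (gpdf_pos t).le one_pos ht
      _ = gpdf t := by ring

lemma mills_upper {t : ℝ} (ht : 1 ≤ t) : 1 - gcdf t ≤ gpdf t / t := by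
  set F : ℝ → ℝ := fun t => 1 - gcdf t - gpdf t / t with hF
  have hderiv : ∀ x : ℝ, x ≠ 0 → HasDerivAt F (gpdf x / x ^ 2) x := by
    intro x hx
    have h := ((hasDerivAt_const x (1:ℝ)).sub (gcdf_hasDerivAt x)).sub
      (((gpdf_hasDerivAt x).div (hasDerivAt_id x) hx))
    refine h.congr_deriv ?_
    simp only [id]
    field_simp
    ring
  have hmono : StrictMonoOn F (Ici (1:ℝ)) := by
    apply strictMonoOn_of_deriv_pos (convex_Ici 1)
    · apply ContinuousOn.sub
      · exact (continuous_const.sub gcdf_continuous).continuousOn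
      · exact ContinuousOn.div gpdf_cont.continuousOn continuousOn_id
          (fun x hx => ne_of_gt (lt_of_lt_of_le one_pos hx))
    · intro x hx
      rw [interior_Ici] at hx
      have hx1 : (1:ℝ) < x := hx
      have hx0 : x ≠ 0 := ne_of_gt (by linarith)
      rw [(hderiv x hx0).deriv]
      exact div_pos (gpdf_pos x) (by nlinarith)
  have htend : Tendsto F atTop (𝓝 0) := by
    have := ((tendsto_const_nhds (x := (1:ℝ)) (f := atTop)).sub
      gcdf_tendsto_atTop).sub gpdf_div_tendsto
    simpa using this
  have hle : F t ≤ 0 := by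
    apply ge_of_tendsto htend
    filter_upwards [eventually_ge_atTop t] with s hs
    exact hmono.monotoneOn ht (le_trans ht hs) hs
  simp only [hF] at hle
  linarith

lemma mills_lower {t : ℝ} (ht : 1 ≤ t) : t * gpdf t / (1 + t ^ 2) ≤ 1 - gcdf t := by
  set G : ℝ → ℝ := fun t => 1 - gcdf t - t * gpdf t / (1 + t ^ 2) with hG
  have hderiv : ∀ x : ℝ, HasDerivAt G (-2 * gpdf x / (1 + x ^ 2) ^ 2) x := by
    intro x
    have hden : (1 + x ^ 2) ≠ 0 := by positivity
    have h1 : HasDerivAt (fun t : ℝ => t * gpdf t) (1 * gpdf x + x * (-x * gpdf x)) x :=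
      (hasDerivAt_id x).mul (gpdf_hasDerivAt x)
    have h2 : HasDerivAt (fun t : ℝ => 1 + t ^ 2) (0 + ↑2 * x ^ 1) x :=
      (hasDerivAt_const x (1:ℝ)).add (hasDerivAt_pow 2 x)
    have hinner := h1.div h2 hden
    have h := ((hasDerivAt_const x (1:ℝ)).sub (gcdf_hasDerivAt x)).sub hinner
    refine h.congr_deriv ?_
    field_simp
    ring
  have hanti : StrictAntiOn G (Ici (1:ℝ)) := by
    apply strictAntiOn_of_deriv_neg (convex_Ici 1)
    · apply Continuous.continuousOn
      apply Continuous.sub (continuous_const.sub gcdf_continuous)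
      exact Continuous.div (continuous_id.mul gpdf_cont) (by fun_prop)
        (fun x => by positivity)
    · intro x hx
      rw [interior_Ici] at hx
      rw [(hderiv x).deriv]
      apply div_neg_of_neg_of_pos
      · nlinarith [gpdf_pos x]
      · positivity
  have hsmall : Tendsto (fun t : ℝ => t * gpdf t / (1 + t ^ 2)) atTop (𝓝 0) := by
    apply tendsto_of_tendsto_of_tendsto_of_le_of_le' tendsto_const_nhds gpdf_tendsto
    · filter_upwards [eventually_ge_atTop (0:ℝ)] with s hs
      exact div_nonneg (mul_nonneg hs (gpdf_pos s).le) (by positivity)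
    · filter_upwards [eventually_ge_atTop (0:ℝ)] with s hs
      rw [div_le_iff₀ (by positivity)]
      nlinarith [gpdf_pos s, sq_nonneg (s - 1)]
  have htend : Tendsto G atTop (𝓝 0) := by
    have := ((tendsto_const_nhds (x := (1:ℝ)) (f := atTop)).sub
      gcdf_tendsto_atTop).sub hsmall
    simpa using this
  have hle : 0 ≤ G t := by
    apply le_of_tendsto htend
    filter_upwards [eventually_ge_atTop t] with s hs
    rcases eq_or_lt_of_le hs with rfl | hlt
    · exact le_refl _
    · exact (hanti ht (le_trans ht hs) hlt).le
  have hle' : 0 ≤ 1 - gcdf t - t * gpdf t / (1 + t ^ 2) := hle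
  linarith

lemma mills_tendsto : Tendsto (fun t : ℝ => t * (1 - gcdf t) / gpdf t) atTop (𝓝 1) := by
  have hlow : Tendsto (fun t : ℝ => t ^ 2 / (1 + t ^ 2)) atTop (𝓝 1) := by
    have h1 : Tendsto (fun t : ℝ => 1 / (1 + t ^ 2)) atTop (𝓝 0) := by
      have ha : Tendsto (fun t : ℝ => 1 + t ^ 2) atTop atTop :=
        tendsto_atTop_add_const_left _ 1 (tendsto_pow_atTop (by norm_num : 2 ≠ 0))
      have hb := tendsto_inv_atTop_zero.comp ha
      simpa [one_div, Function.comp_def] using hb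
    have := (tendsto_const_nhds (x := (1:ℝ)) (f := atTop)).sub h1
    rw [sub_zero] at this
    refine this.congr ?_
    intro t
    have h2 : (1 : ℝ) + t ^ 2 ≠ 0 := by positivity
    field_simp
    ring
  apply tendsto_of_tendsto_of_tendsto_of_le_of_le' hlow tendsto_const_nhds
  · filter_upwards [eventually_ge_atTop (1:ℝ)] with t ht
    rw [div_le_div_iff₀ (by positivity) (gpdf_pos t)]
    have h := mills_lower ht
    rw [div_le_iff₀ (by positivity : (0:ℝ) < 1 + t ^ 2)] at h
    nlinarith [gpdf_pos t, one_sub_gcdf_pos t]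
  · filter_upwards [eventually_ge_atTop (1:ℝ)] with t ht
    rw [div_le_one (gpdf_pos t)]
    have h := mills_upper ht
    rw [le_div_iff₀ (by linarith : (0:ℝ) < t)] at h
    linarith

lemma ratio_tendsto_zero : Tendsto (fun t : ℝ => (1 - gcdf t) / gpdf t) atTop (𝓝 0) := by
  have h := mills_tendsto.mul tendsto_inv_atTop_zero
  rw [mul_zero] at h
  refine h.congr' ?_
  filter_upwards [eventually_ge_atTop (1:ℝ)] with t ht
  have ht0 : t ≠ 0 := by linarith
  have hg : gpdf t ≠ 0 := (gpdf_pos t).ne'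
  field_simp [ht0]

lemma sTil_pos {η σ : ℝ} (hη : 0 < η) (hσ : 0 < σ) : 0 < sTil η σ := by
  unfold sTil sHat
  positivity

lemma mills_tendsto' :
    Tendsto (fun t : ℝ => t * ((1 - gcdf t) / gpdf t)) atTop (𝓝 1) :=
  mills_tendsto.congr fun t => mul_div_assoc _ _ _

/-- as the budget `α` tends to `0⁺`, the fairness-cost upper bound
(for `γ = 1`) converges to a limit depending only on the variances. -/
theorem stmt10 (pA μA μB ηA ηB σA σB : ℝ)
    (hpA : pA ∈ Set.Ioo (0:ℝ) 1)
    (hηA : 0 < ηA) (hηB : 0 < ηB) (hσA : 0 < σA) (hσB : 0 < σB)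
    (hstil : sTil ηA σA < sTil ηB σB) (hμA : 0 ≤ μA) (hμB : 0 ≤ μB) :
    Filter.Tendsto
      (fun α : ℝ =>
        1 - pA * ((μA - μB) + gquant (1 - α) * (sTil ηA σA - sTil ηB σB))
          / (pA * μA + (1 - pA) * μB
              + (gpdf (gquant (1 - α)) / α) * (pA * sTil ηA σA + (1 - pA) * sTil ηB σB)))
      (nhdsWithin 0 (Set.Ioi 0))
      (nhds (1 - pA * (sTil ηA σA - sTil ηB σB)
          / (pA * sTil ηA σA + (1 - pA) * sTil ηB σB))) := by
  obtain ⟨hpA0, hpA1⟩ := hpA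
  have hsA : 0 < sTil ηA σA := sTil_pos hηA hσA
  have hsB : 0 < sTil ηB σB := sTil_pos hηB hσB
  set sA := sTil ηA σA with hsAdef
  set sB := sTil ηB σB with hsBdef
  set D := μA - μB with hD
  set Δ := sA - sB with hΔ
  set M := pA * μA + (1 - pA) * μB with hM
  set S := pA * sA + (1 - pA) * sB with hS
  have hSpos : 0 < S :=
    add_pos (mul_pos hpA0 hsA) (mul_pos (by linarith) hsB)
  set r : ℝ → ℝ := fun t => (1 - gcdf t) / gpdf t with hr
  have hrpos : ∀ t, 0 < r t := fun t =>
    div_pos (one_sub_gcdf_pos t) (gpdf_pos t)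
  -- limit of the surrogate function `g` at infinity
  have hnum : Tendsto (fun t => D * r t + (t * r t) * Δ) atTop (𝓝 Δ) := by
    have h := (ratio_tendsto_zero.const_mul D).add (mills_tendsto'.mul_const Δ)
    rw [mul_zero, zero_add, one_mul] at h
    exact h
  have hden : Tendsto (fun t => M * r t + S) atTop (𝓝 S) := by
    have h := (ratio_tendsto_zero.const_mul M).add
      (tendsto_const_nhds (x := S) (f := atTop))
    rw [mul_zero, zero_add] at h
    exact h
  have hfrac := hnum.div hden hSpos.ne'
  have hg2 : Tendsto
      (fun t => 1 - pA * ((D * r t + (t * r t) * Δ) / (M * r t + S))) atTop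
      (𝓝 (1 - pA * (Δ / S))) :=
    tendsto_const_nhds.sub (hfrac.const_mul pA)
  have key : ∀ t : ℝ,
      (D * r t + (t * r t) * Δ) / (M * r t + S)
        = (D + t * Δ) / (M + gpdf t / (1 - gcdf t) * S) := by
    intro t
    have h1 : gpdf t ≠ 0 := (gpdf_pos t).ne'
    have h2 : (1 : ℝ) - gcdf t ≠ 0 := (one_sub_gcdf_pos t).ne'
    have e1 : D * r t + (t * r t) * Δ = (D + t * Δ) * r t := by ring
    have e2 : M * r t + S = (M + gpdf t / (1 - gcdf t) * S) * r t := by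
      simp only [hr]
      field_simp
    rw [e1, e2, mul_div_mul_right _ _ (hrpos t).ne']
  have hg : Tendsto
      (fun t => 1 - pA * ((D + t * Δ) / (M + gpdf t / (1 - gcdf t) * S))) atTop
      (𝓝 (1 - pA * (Δ / S))) := by
    refine hg2.congr fun t => ?_
    rw [key t]
  -- compose with the quantile map
  have hcomp := hg.comp gquant_tendsto
  rw [show pA * (Δ / S) = pA * Δ / S from (mul_div_assoc _ _ _).symm] at hcomp
  refine hcomp.congr' ?_
  filter_upwards [Ioo_mem_nhdsGT_of_mem
    (show (0:ℝ) ∈ Ico 0 1 from ⟨le_refl _, one_pos⟩)] with α hα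
  have hy : (1 - α) ∈ Ioo (0:ℝ) 1 := ⟨by linarith [hα.2], by linarith [hα.1]⟩
  have hq : 1 - gcdf (gquant (1 - α)) = α := by
    rw [gcdf_gquant hy]; ring
  simp only [Function.comp]
  rw [hq, mul_div_assoc]
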